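/- Let A = (a_1,...,a_n) be distinct elements of F_q and 1 < k < n-1. Every π ∈ Per(RS(A,k)) is an affine permutation of A; that is, the interpolating polynomial p_π with p_π(a_j) = a_{π(j)} has degree exactly 1. -/

import Mathlib

open Polynomial Finset

private lemma rs_coeff_pred_eq_sum {F : Type*} [Field F] {n : ℕ} (a : Fin n → F)
    (ha : Function.Injective a) (r : F[X]) (hr : r.degree < (n : ℕ)) :
    r.coeff (n - 1) =
      ∑ i, (∏ j ∈ Finset.univ.erase i, (a i - a j)⁻¹) * r.eval (a i) := by
  have hinj : Set.InjOn a ↑(Finset.univ : Finset (Fin n)) := fun x _ y _ h => ha h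
  have hcard : #(Finset.univ : Finset (Fin n)) = n := by simp
  have hr' : r.degree < (#(Finset.univ : Finset (Fin n)) : WithBot ℕ) := by
    rw [hcard]; exact hr
  conv_lhs => rw [Lagrange.eq_interpolate hinj hr']
  rw [Lagrange.interpolate_apply, Polynomial.finset_sum_coeff]
  refine Finset.sum_congr rfl fun i _ => ?_
  rw [Polynomial.coeff_C_mul]
  have hnd : (Lagrange.basis Finset.univ a i).natDegree = n - 1 := by
    rw [Lagrange.natDegree_basis hinj (Finset.mem_univ i), hcard]
  have hlc : (Lagrange.basis Finset.univ a i).leadingCoeff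
      = ∏ j ∈ Finset.univ.erase i, (a i - a j)⁻¹ := by
    rw [Lagrange.basis, Polynomial.leadingCoeff_prod]
    refine Finset.prod_congr rfl fun j hj => ?_
    rw [Lagrange.basisDivisor, Polynomial.leadingCoeff_mul, Polynomial.leadingCoeff_C,
      (Polynomial.monic_X_sub_C (a j)).leadingCoeff, mul_one]
  rw [← hnd, Polynomial.coeff_natDegree, hlc, mul_comm]

private lemma rs_coeff_mod_eq_sum {F : Type*} [Field F] {n : ℕ} (a : Fin n → F)
    (ha : Function.Injective a) (g : F[X]) :
    ((g %ₘ Lagrange.nodal Finset.univ a).coeff (n - 1)) =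
      ∑ i, (∏ j ∈ Finset.univ.erase i, (a i - a j)⁻¹) * g.eval (a i) := by
  have hM : (Lagrange.nodal (Finset.univ : Finset (Fin n)) a).Monic := Lagrange.nodal_monic
  have hdeg : (Lagrange.nodal (Finset.univ : Finset (Fin n)) a).degree = (n : WithBot ℕ) := by
    rw [Lagrange.degree_nodal]; simp
  have h1 : (g %ₘ Lagrange.nodal Finset.univ a).degree < (n : ℕ) := by
    rw [← hdeg]; exact Polynomial.degree_modByMonic_lt g hM
  rw [rs_coeff_pred_eq_sum a ha _ h1]
  refine Finset.sum_congr rfl fun i _ => ?_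
  congr 1
  have h2 : (g %ₘ Lagrange.nodal Finset.univ a)
      = g - Lagrange.nodal Finset.univ a * (g /ₘ Lagrange.nodal Finset.univ a) :=
    eq_sub_of_add_eq (Polynomial.modByMonic_add_div g (Lagrange.nodal Finset.univ a))
  rw [h2, Polynomial.eval_sub, Polynomial.eval_mul,
    Lagrange.eval_nodal_at_node (Finset.mem_univ i), zero_mul, sub_zero]

/-- For 1 < k < n-1, every π ∈ Per(RS(A,k)) is an affine
permutation of A: its interpolating polynomial p_π has degree exactly 1. -/
theorem perm_of_RS_is_affine {F : Type*} [Field F] [Fintype F] {n k : ℕ}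
    (hk : 1 < k) (hkn : k < n - 1)
    (a : Fin n → F) (ha : Function.Injective a)
    (π : Equiv.Perm (Fin n))
    (hπ : (fun v : Fin n → F => fun i => v (π i)) ''
        {v : Fin n → F | ∃ f : F[X], f.degree < (k : ℕ) ∧ v = fun i => f.eval (a i)} =
      {v : Fin n → F | ∃ f : F[X], f.degree < (k : ℕ) ∧ v = fun i => f.eval (a i)})
    (pπ : F[X]) (hdeg : pπ.degree < (n : ℕ))
    (hval : ∀ j, pπ.eval (a j) = a (π j)) :
    pπ.degree = 1 := by
  classical
  have hn : k + 2 ≤ n := by omega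
  have hinj : Set.InjOn a ↑(Finset.univ : Finset (Fin n)) := fun x _ y _ h => ha h
  have hcard : #(Finset.univ : Finset (Fin n)) = n := by simp
  have hcardW : ((#(Finset.univ : Finset (Fin n)) : ℕ) : WithBot ℕ) = ((n : ℕ) : WithBot ℕ) := by
    rw [hcard]
  set u : Fin n → F := fun i => ∏ j ∈ Finset.univ.erase i, (a i - a j)⁻¹ with hu
  have hu0 : ∀ i, u i ≠ 0 := by
    intro i
    refine Finset.prod_ne_zero_iff.mpr fun j hj => ?_
    exact inv_ne_zero (sub_ne_zero_of_ne fun h => (Finset.mem_erase.mp hj).1 (ha h).symm)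
  -- Code membership transfer
  have hfwd : ∀ f : F[X], f.degree < (k : ℕ) →
      ∃ f' : F[X], f'.degree < (k : ℕ) ∧ ∀ i, f'.eval (a i) = f.eval (a (π i)) := by
    intro f hf
    have hmem : (fun i => f.eval (a (π i))) ∈
        {v : Fin n → F | ∃ f : F[X], f.degree < (k : ℕ) ∧ v = fun i => f.eval (a i)} := by
      rw [← hπ]
      exact ⟨fun i => f.eval (a i), ⟨f, hf, rfl⟩, rfl⟩
    obtain ⟨f', hf', hfe⟩ := hmem
    exact ⟨f', hf', fun i => (congrFun hfe i).symm⟩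
  have hbwd : ∀ f : F[X], f.degree < (k : ℕ) →
      ∃ f' : F[X], f'.degree < (k : ℕ) ∧ ∀ i, f'.eval (a (π i)) = f.eval (a i) := by
    intro f hf
    have hmem : (fun i => f.eval (a i)) ∈ (fun v : Fin n → F => fun i => v (π i)) ''
        {v : Fin n → F | ∃ f : F[X], f.degree < (k : ℕ) ∧ v = fun i => f.eval (a i)} := by
      rw [hπ]; exact ⟨f, hf, rfl⟩
    obtain ⟨w, ⟨f', hf', rfl⟩, hwe⟩ := hmem
    exact ⟨f', hf', fun i => congrFun hwe i⟩
  -- Step 1: deg pπ < k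
  have hXdeg : (X : F[X]).degree < (k : ℕ) := by
    rw [Polynomial.degree_X]; exact_mod_cast hk
  obtain ⟨f₁, hf₁deg, hf₁⟩ := hfwd X hXdeg
  have hp_eq : pπ = f₁ := by
    refine Polynomial.eq_of_degrees_lt_of_eval_index_eq Finset.univ hinj ?_ ?_ fun i _ => ?_
    · rw [hcard]; exact hdeg
    · rw [hcard]; exact lt_of_lt_of_le hf₁deg (by exact_mod_cast (by omega : k ≤ n))
    · rw [hval i, hf₁ i, Polynomial.eval_X]
  have hpk : pπ.degree < (k : ℕ) := hp_eq ▸ hf₁deg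
  -- Step 2: pπ nonconstant
  have hne : pπ.eval (a ⟨0, by omega⟩) ≠ pπ.eval (a ⟨1, by omega⟩) := by
    rw [hval, hval]
    intro h
    have h2 : (⟨0, by omega⟩ : Fin n) = ⟨1, by omega⟩ := π.injective (ha h)
    simp at h2
  have hp0 : pπ ≠ 0 := fun h => hne (by rw [h]; simp)
  have hd1 : 1 ≤ pπ.natDegree := by
    by_contra h
    push_neg at h
    have hC := Polynomial.eq_C_of_natDegree_le_zero (p := pπ) (by omega)
    exact hne (by rw [hC]; simp)
  have hdk : pπ.natDegree < k := (Polynomial.natDegree_lt_iff_degree_lt hp0).mpr hpk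
  -- Step 3: orthogonality
  have horth : ∀ m : ℕ, m < n - k → ∀ f : F[X], f.degree < (k : ℕ) →
      ∑ i, u (π i) * (a (π i)) ^ m * f.eval (a i) = 0 := by
    intro m hm f hf
    obtain ⟨f', hf'deg, hf'⟩ := hbwd f hf
    have hsum : ∑ i, u (π i) * (a (π i)) ^ m * f.eval (a i)
        = ∑ i, u i * (X ^ m * f' : F[X]).eval (a i) := by
      rw [← Equiv.sum_comp π (fun j => u j * (X ^ m * f' : F[X]).eval (a j))]
      refine Finset.sum_congr rfl fun i _ => ?_
      rw [← hf' i]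
      simp [mul_assoc, mul_comm, mul_left_comm]
    rw [hsum, ← rs_coeff_mod_eq_sum a ha]
    have hdegg : (X ^ m * f' : F[X]).degree < ((n - 1 : ℕ) : WithBot ℕ) := by
      rcases eq_or_ne f' 0 with rfl | hf'0
      · rw [mul_zero, Polynomial.degree_zero]
        exact WithBot.bot_lt_coe (n - 1)
      · rw [Polynomial.degree_eq_natDegree (mul_ne_zero (pow_ne_zero _ Polynomial.X_ne_zero) hf'0),
          Polynomial.natDegree_mul (pow_ne_zero _ Polynomial.X_ne_zero) hf'0,
          Polynomial.natDegree_X_pow]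
        have : f'.natDegree < k := (Polynomial.natDegree_lt_iff_degree_lt hf'0).mpr hf'deg
        exact_mod_cast (by omega : m + f'.natDegree < n - 1)
    have hmod : (X ^ m * f' : F[X]) %ₘ Lagrange.nodal Finset.univ a = X ^ m * f' := by
      rw [Polynomial.modByMonic_eq_self_iff Lagrange.nodal_monic, Lagrange.degree_nodal, hcard]
      exact lt_of_lt_of_le hdegg (by exact_mod_cast (by omega : n - 1 ≤ n))
    rw [hmod]
    exact Polynomial.coeff_eq_zero_of_degree_lt hdegg
  -- Step 4: dual codewords
  have hdual : ∀ m : ℕ, m < n - k → ∃ h : F[X], h.degree < ((n - k : ℕ) : WithBot ℕ) ∧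
      ∀ i, u (π i) * (a (π i)) ^ m = u i * h.eval (a i) := by
    intro m hm
    set h := Lagrange.interpolate Finset.univ a
      (fun i => (u i)⁻¹ * (u (π i) * (a (π i)) ^ m)) with hh
    have hhev : ∀ i, h.eval (a i) = (u i)⁻¹ * (u (π i) * (a (π i)) ^ m) := fun i =>
      Lagrange.eval_interpolate_at_node _ hinj (Finset.mem_univ i)
    have hval' : ∀ i, u (π i) * (a (π i)) ^ m = u i * h.eval (a i) := by
      intro i; rw [hhev i, ← mul_assoc, mul_inv_cancel₀ (hu0 i), one_mul]
    refine ⟨h, ?_, hval'⟩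
    have key : ∀ s : ℕ, s ≤ k → h.degree < ((n - s : ℕ) : WithBot ℕ) := by
      intro s
      induction s with
      | zero =>
        intro _
        rw [Nat.sub_zero, hh]
        have := Lagrange.degree_interpolate_lt
          (fun i => (u i)⁻¹ * (u (π i) * (a (π i)) ^ m)) hinj
        rwa [hcard] at this
      | succ s ih =>
        intro hsk
        have hs := ih (by omega)
        rw [Polynomial.degree_lt_iff_coeff_zero]
        intro t ht
        by_cases hts : n - s ≤ t
        · exact (Polynomial.degree_lt_iff_coeff_zero h (n - s)).mp hs t hts
        · have htE : t = n - 1 - s := by omega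
          subst htE
          have e1 : (h * X ^ s).coeff (n - 1) = h.coeff (n - 1 - s) := by
            have hns : n - 1 - s + s = n - 1 := by omega
            have := Polynomial.coeff_mul_X_pow h s (n - 1 - s)
            rwa [hns] at this
          have hdeghs : (h * X ^ s).degree < ((n : ℕ) : WithBot ℕ) := by
            rcases eq_or_ne h 0 with h0 | h0
            · rw [h0, zero_mul, Polynomial.degree_zero]; exact WithBot.bot_lt_coe _
            · rw [Polynomial.degree_eq_natDegree
                (mul_ne_zero h0 (pow_ne_zero _ Polynomial.X_ne_zero)),
                Polynomial.natDegree_mul h0 (pow_ne_zero _ Polynomial.X_ne_zero),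
                Polynomial.natDegree_X_pow]
              have : h.natDegree < n - s := (Polynomial.natDegree_lt_iff_degree_lt h0).mpr hs
              exact_mod_cast (by omega : h.natDegree + s < n)
          have hmod : (h * X ^ s) %ₘ Lagrange.nodal Finset.univ a = h * X ^ s := by
            rw [Polynomial.modByMonic_eq_self_iff Lagrange.nodal_monic, Lagrange.degree_nodal,
              hcard]
            exact hdeghs
          have e2 := rs_coeff_mod_eq_sum a ha (h * X ^ s)
          rw [hmod, e1] at e2
          have e3 := horth m hm (X ^ s)
            (by rw [Polynomial.degree_X_pow]; exact_mod_cast (by omega : s < k))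
          have e4 : ∑ i, u i * (h * X ^ s : F[X]).eval (a i)
              = ∑ i, u (π i) * (a (π i)) ^ m * (X ^ s : F[X]).eval (a i) := by
            refine Finset.sum_congr rfl fun i _ => ?_
            rw [Polynomial.eval_mul, ← mul_assoc, ← hval' i]
          rw [e2, e4, e3]
    have := key k le_rfl
    exact this
  -- Step 5: chain
  obtain ⟨h₀, hh₀deg, hh₀⟩ := hdual 0 (by omega)
  have hh₀' : ∀ i, u (π i) = u i * h₀.eval (a i) := by
    intro i; have := hh₀ i; rwa [pow_zero, mul_one] at this
  have hh₀0 : h₀ ≠ 0 := by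
    intro h
    have h2 := hh₀' ⟨0, by omega⟩
    rw [h] at h2; simp at h2
    exact hu0 _ h2
  have hh₀nd : h₀.natDegree < n - k := (Polynomial.natDegree_lt_iff_degree_lt hh₀0).mpr hh₀deg
  have hchain : ∀ m : ℕ, m ≤ n - k - 1 →
      h₀.natDegree + m * pπ.natDegree ≤ n - k - 1 := by
    intro m
    induction m with
    | zero => intro _; omega
    | succ m ih =>
      intro hm
      have hmih := ih (by omega)
      obtain ⟨h', hh'deg, hh'⟩ := hdual (m + 1) (by omega)
      have hpm0 : (pπ : F[X]) ^ (m + 1) ≠ 0 := pow_ne_zero _ hp0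
      have hne0 : h₀ * pπ ^ (m + 1) ≠ 0 := mul_ne_zero hh₀0 hpm0
      have hndeg : (h₀ * pπ ^ (m + 1)).natDegree
          = h₀.natDegree + (m + 1) * pπ.natDegree := by
        rw [Polynomial.natDegree_mul hh₀0 hpm0, Polynomial.natDegree_pow]
      have heq : h₀ * pπ ^ (m + 1) = h' := by
        refine Polynomial.eq_of_degrees_lt_of_eval_index_eq Finset.univ hinj ?_ ?_ fun i _ => ?_
        · rw [hcard, Polynomial.degree_eq_natDegree hne0, hndeg]
          have hexp : (m + 1) * pπ.natDegree = m * pπ.natDegree + pπ.natDegree := by ring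
          exact_mod_cast (by omega : h₀.natDegree + (m + 1) * pπ.natDegree < n)
        · rw [hcard]
          exact lt_of_lt_of_le hh'deg (by exact_mod_cast (by omega : n - k ≤ n))
        · rw [Polynomial.eval_mul, Polynomial.eval_pow, hval i]
          apply mul_left_cancel₀ (hu0 i)
          rw [← mul_assoc, ← hh₀' i]
          exact hh' i
      have hlt : (h₀ * pπ ^ (m + 1)).natDegree < n - k := by
        rw [heq]
        exact (Polynomial.natDegree_lt_iff_degree_lt (heq ▸ hne0)).mpr hh'deg
      rw [hndeg] at hlt
      have hexp : (m + 1) * pπ.natDegree = m * pπ.natDegree + pπ.natDegree := by ring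
      omega
  have hfin := hchain (n - k - 1) le_rfl
  have hd : pπ.natDegree = 1 := by
    have hmul : (n - k - 1) * pπ.natDegree ≤ (n - k - 1) * 1 := by
      rw [mul_one]; exact le_trans (Nat.le_add_left _ _) hfin
    have := Nat.le_of_mul_le_mul_left hmul (by omega)
    omega
  rw [Polynomial.degree_eq_natDegree hp0, hd]
  rfl
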